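/- For 1-dimensional Gaussian NCE with p*(x) = N(R,1) and q(x) = N(0,1), the maximum eigenvalue of the Hessian of the NCE loss at the optimum τ*, with sufficient statistic T(x) = [x, −1], satisfies σ_max(∇²L(τ*)) ≤ (R/√(2π)) exp(−R²/8) for R sufficiently large. -/

import Mathlib

open MeasureTheory Real Set Filter Topology

/-- Unit-variance Gaussian density with mean `μ`. -/
noncomputable def gaussPdf (μ x : ℝ) : ℝ :=
  (1 / Real.sqrt (2 * Real.pi)) * Real.exp (-(x - μ) ^ 2 / 2)

lemma gaussPdf_pos (μ x : ℝ) : 0 < gaussPdf μ x := by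
  unfold gaussPdf
  positivity

lemma gauss0_eq' (x : ℝ) : gaussPdf 0 x
    = (1 / Real.sqrt (2 * Real.pi)) * Real.exp (-(1/2) * x ^ 2) := by
  unfold gaussPdf
  rw [show -(x - 0) ^ 2 / 2 = -(1/2) * x ^ 2 by ring]

lemma gauss0_eq : (fun x : ℝ => gaussPdf 0 x)
    = fun x => (1 / Real.sqrt (2 * Real.pi)) * Real.exp (-(1/2) * x ^ 2) := by
  funext x
  unfold gaussPdf
  rw [show -(x - 0) ^ 2 / 2 = -(1/2) * x ^ 2 by ring]

lemma integrable_gauss0 : Integrable (fun x : ℝ => gaussPdf 0 x) := by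
  rw [gauss0_eq]
  exact (integrable_exp_neg_mul_sq one_half_pos).const_mul _

lemma integrable_xgauss : Integrable (fun x : ℝ => x * gaussPdf 0 x) := by
  have h : (fun x : ℝ => x * gaussPdf 0 x)
      = fun x => (1 / Real.sqrt (2 * Real.pi)) * (x * Real.exp (-(1/2) * x ^ 2)) := by
    funext x; rw [gauss0_eq']; ring
  rw [h]
  exact (integrable_mul_exp_neg_mul_sq one_half_pos).const_mul _

lemma integrable_x2gauss : Integrable (fun x : ℝ => x ^ 2 * gaussPdf 0 x) := by
  have hg : Integrable (fun x : ℝ =>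
      (4 / Real.sqrt (2 * Real.pi)) * Real.exp (-(1/4) * x ^ 2)) :=
    (integrable_exp_neg_mul_sq (by norm_num : (0:ℝ) < 1/4)).const_mul _
  refine hg.mono' ?_ (ae_of_all _ fun x => ?_)
  · simp only [gauss0_eq']
    exact (continuous_pow 2).aestronglyMeasurable.mul
      ((Real.continuous_exp.comp (by continuity)).aestronglyMeasurable.const_mul _)
  · have h0 : 0 ≤ x ^ 2 * gaussPdf 0 x :=
      mul_nonneg (sq_nonneg x) (gaussPdf_pos 0 x).le
    rw [Real.norm_of_nonneg h0, gauss0_eq' x]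
    have h1 : Real.exp (-(1/2) * x ^ 2) * Real.exp (x ^ 2 / 4)
        = Real.exp (-(1/4) * x ^ 2) := by
      rw [← Real.exp_add]; ring_nf
    have h2 : x ^ 2 / 4 + 1 ≤ Real.exp (x ^ 2 / 4) := Real.add_one_le_exp _
    have h3 : (0:ℝ) < Real.exp (-(1/2) * x ^ 2) := Real.exp_pos _
    have hs : (0:ℝ) < Real.sqrt (2 * Real.pi) := Real.sqrt_pos.mpr (by positivity)
    have key : x ^ 2 * Real.exp (-(1/2) * x ^ 2) ≤ 4 * Real.exp (-(1/4) * x ^ 2) := by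
      nlinarith [h3, Real.exp_pos (x^2/4), sq_nonneg x]
    calc x ^ 2 * (1 / Real.sqrt (2*Real.pi) * Real.exp (-(1/2) * x ^ 2))
        = (1 / Real.sqrt (2*Real.pi)) * (x ^ 2 * Real.exp (-(1/2) * x ^ 2)) := by ring
      _ ≤ (1 / Real.sqrt (2*Real.pi)) * (4 * Real.exp (-(1/4) * x ^ 2)) := by
          exact mul_le_mul_of_nonneg_left key (by positivity)
      _ = 4 / Real.sqrt (2*Real.pi) * Real.exp (-(1/4) * x ^ 2) := by ring

lemma integrable_f : Integrable (fun x : ℝ => gaussPdf 0 x * (x ^ 2 + 1)) := by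
  have h : (fun x : ℝ => gaussPdf 0 x * (x ^ 2 + 1))
      = fun x => x ^ 2 * gaussPdf 0 x + gaussPdf 0 x := by funext x; ring
  rw [h]
  exact integrable_x2gauss.add integrable_gauss0

lemma hasDerivAt_neg_gauss (x : ℝ) :
    HasDerivAt (fun y : ℝ => -gaussPdf 0 y) (x * gaussPdf 0 x) x := by
  have h0 : HasDerivAt (fun y : ℝ => -(y - 0) ^ 2 / 2) (-x) x := by
    have h1 : HasDerivAt (fun y : ℝ => (y - 0) ^ 2)
        ((2 : ℕ) * (x - 0) ^ 1 * 1) x := ((hasDerivAt_id x).sub_const 0).pow 2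
    have h2 : HasDerivAt (fun y : ℝ => -(y - 0) ^ 2 / 2) _ x := (h1.neg).div_const 2
    convert h2 using 1; push_cast; ring
  have h3 : HasDerivAt (fun y : ℝ => -gaussPdf 0 y) _ x :=
    (h0.exp.const_mul (1 / Real.sqrt (2 * Real.pi))).neg
  convert h3 using 1
  unfold gaussPdf
  ring

lemma hasDerivAt_gauss (x : ℝ) :
    HasDerivAt (fun y : ℝ => gaussPdf 0 y) (-(x * gaussPdf 0 x)) x := by
  have h : HasDerivAt (fun y : ℝ => - -gaussPdf 0 y) _ x := (hasDerivAt_neg_gauss x).neg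
  simpa using h

lemma tendsto_gauss : Tendsto (fun y : ℝ => gaussPdf 0 y) atTop (𝓝 0) := by
  rw [gauss0_eq]
  have hg : Tendsto (fun y : ℝ => (1/2) * y ^ 2) atTop atTop :=
    (tendsto_pow_atTop two_ne_zero).const_mul_atTop one_half_pos
  have := (tendsto_exp_neg_atTop_nhds_zero.comp hg).const_mul
      (1 / Real.sqrt (2 * Real.pi))
  simpa [Function.comp_def, neg_mul] using this

lemma tendsto_xgauss : Tendsto (fun y : ℝ => y * gaussPdf 0 y) atTop (𝓝 0) := by
  have hd : Tendsto (fun y : ℝ => (1 / Real.sqrt (2 * Real.pi)) *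
      (y * Real.exp (-(1/2) * y))) atTop (𝓝 0) := by
    have h := tendsto_rpow_mul_exp_neg_mul_atTop_nhds_zero 1 (1/2) one_half_pos
    simp only [Real.rpow_one] at h
    simpa using h.const_mul (1 / Real.sqrt (2 * Real.pi))
  apply squeeze_zero' (Filter.eventually_atTop.2 ⟨0, fun y hy => mul_nonneg hy (gaussPdf_pos 0 y).le⟩)
    (Filter.eventually_atTop.2 ⟨1, fun y hy => ?_⟩) hd
  rw [gauss0_eq' y]
  have h1 : Real.exp (-(1/2) * y ^ 2) ≤ Real.exp (-(1/2) * y) := by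
    apply Real.exp_le_exp.2; nlinarith
  have hs : (0:ℝ) ≤ 1 / Real.sqrt (2 * Real.pi) := by positivity
  calc y * ((1 / Real.sqrt (2 * Real.pi)) * Real.exp (-(1/2) * y ^ 2))
      = (1 / Real.sqrt (2 * Real.pi)) * (y * Real.exp (-(1/2) * y ^ 2)) := by ring
    _ ≤ (1 / Real.sqrt (2 * Real.pi)) * (y * Real.exp (-(1/2) * y)) := by
        exact mul_le_mul_of_nonneg_left
          (mul_le_mul_of_nonneg_left h1 (by linarith)) hs

lemma tail_xgauss (a : ℝ) :
    ∫ x in Ioi a, x * gaussPdf 0 x = gaussPdf 0 a := by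
  have h := integral_Ioi_of_hasDerivAt_of_tendsto'
    (f := fun y : ℝ => -gaussPdf 0 y) (f' := fun x => x * gaussPdf 0 x) (m := 0) (a := a)
    (fun x _ => hasDerivAt_neg_gauss x) integrable_xgauss.integrableOn
    (by simpa using tendsto_gauss.neg)
  simpa using h

lemma tail_gauss_le (a : ℝ) (ha : 0 < a) :
    ∫ x in Ioi a, gaussPdf 0 x ≤ gaussPdf 0 a / a := by
  have hmono : ∫ x in Ioi a, gaussPdf 0 x ≤ ∫ x in Ioi a, x * gaussPdf 0 x / a := by
    apply setIntegral_mono_on integrable_gauss0.integrableOn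
      ((integrable_xgauss.div_const a).integrableOn) measurableSet_Ioi
    intro x hx
    rw [le_div_iff₀ ha]
    have := (gaussPdf_pos 0 x).le
    nlinarith [mem_Ioi.mp hx]
  calc ∫ x in Ioi a, gaussPdf 0 x ≤ ∫ x in Ioi a, x * gaussPdf 0 x / a := hmono
    _ = (∫ x in Ioi a, x * gaussPdf 0 x) / a := by rw [integral_div]
    _ = gaussPdf 0 a / a := by rw [tail_xgauss]

lemma tail_x2gauss (a : ℝ) :
    ∫ x in Ioi a, x ^ 2 * gaussPdf 0 x
      = a * gaussPdf 0 a + ∫ x in Ioi a, gaussPdf 0 x := by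
  have hderiv : ∀ x : ℝ, HasDerivAt (fun y : ℝ => -(y * gaussPdf 0 y))
      (x ^ 2 * gaussPdf 0 x - gaussPdf 0 x) x := by
    intro x
    have h : HasDerivAt (fun y : ℝ => -(y * gaussPdf 0 y)) _ x :=
      ((hasDerivAt_id x).mul (hasDerivAt_gauss x)).neg
    convert h using 1
    simp only [id_eq]
    ring
  have hint : IntegrableOn (fun x : ℝ => x ^ 2 * gaussPdf 0 x - gaussPdf 0 x) (Ioi a) :=
    (integrable_x2gauss.sub integrable_gauss0).integrableOn
  have h := integral_Ioi_of_hasDerivAt_of_tendsto'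
    (f := fun y : ℝ => -(y * gaussPdf 0 y))
    (f' := fun x => x ^ 2 * gaussPdf 0 x - gaussPdf 0 x) (m := 0) (a := a)
    (fun x _ => hderiv x) hint (by simpa using tendsto_xgauss.neg)
  have h2 : ∫ x in Ioi a, (x ^ 2 * gaussPdf 0 x - gaussPdf 0 x)
      = a * gaussPdf 0 a := by rw [h]; ring
  have h3 := integral_sub (integrable_x2gauss.integrableOn (s := Ioi a))
    (integrable_gauss0.integrableOn (s := Ioi a))
  rw [h3] at h2
  linarith [h2]

lemma tail_f_le (a : ℝ) (ha : 0 < a) :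
    ∫ x in Ioi a, gaussPdf 0 x * (x ^ 2 + 1)
      ≤ a * gaussPdf 0 a + 2 * (gaussPdf 0 a / a) := by
  have hsplit : ∫ x in Ioi a, gaussPdf 0 x * (x ^ 2 + 1)
      = (∫ x in Ioi a, x ^ 2 * gaussPdf 0 x) + ∫ x in Ioi a, gaussPdf 0 x := by
    rw [← integral_add integrable_x2gauss.integrableOn integrable_gauss0.integrableOn]
    congr 1; funext x; ring
  rw [hsplit, tail_x2gauss]
  have := tail_gauss_le a ha
  linarith

lemma gaussPdf_shift (R x : ℝ) : gaussPdf R x = gaussPdf 0 (x - R) := by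
  unfold gaussPdf
  rw [sub_zero]

lemma gaussPdf_even (x : ℝ) : gaussPdf 0 (-x) = gaussPdf 0 x := by
  unfold gaussPdf
  rw [show (-x - (0:ℝ)) ^ 2 = (x - 0) ^ 2 by ring]

/-- For 1d Gaussian NCE with `p* = N(R,1)`, `q = N(0,1)` and sufficient statistic
`T(x) = [x, −1]`, the maximum eigenvalue of the Hessian of the NCE loss at the optimum,
`(1/2) ∫ (p* q/(p*+q)) T Tᵀ`, is at most `(R/√(2π)) exp(−R²/8)` for `R` large enough. -/
theorem nce_smoothness_at_optimum :
    ∃ R0 : ℝ, ∀ R : ℝ, R0 ≤ R → ∀ v : Fin 2 → ℝ, (v 0) ^ 2 + (v 1) ^ 2 = 1 →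
      (1 / 2 : ℝ) * ∫ x : ℝ,
          (gaussPdf R x * gaussPdf 0 x / (gaussPdf R x + gaussPdf 0 x)) *
            (v 0 * x - v 1) ^ 2 ≤
        (R / Real.sqrt (2 * Real.pi)) * Real.exp (-R ^ 2 / 8) := by
  refine ⟨3, fun R hR v hv => ?_⟩
  have hRpos : (0:ℝ) < R := by linarith
  have hapos : (0:ℝ) < R / 2 := by linarith
  set G : ℝ → ℝ := fun x =>
    gaussPdf R x * gaussPdf 0 x / (gaussPdf R x + gaussPdf 0 x) * (v 0 * x - v 1) ^ 2
    with hGdef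
  set f : ℝ → ℝ := fun x => gaussPdf 0 x * (x ^ 2 + 1) with hfdef
  -- pointwise bounds
  have hsq : ∀ x : ℝ, (v 0 * x - v 1) ^ 2 ≤ x ^ 2 + 1 := fun x => by
    nlinarith [sq_nonneg (v 0 + v 1 * x)]
  have hden : ∀ x : ℝ, 0 < gaussPdf R x + gaussPdf 0 x := fun x =>
    add_pos (gaussPdf_pos R x) (gaussPdf_pos 0 x)
  have hratio_q : ∀ x : ℝ,
      gaussPdf R x * gaussPdf 0 x / (gaussPdf R x + gaussPdf 0 x) ≤ gaussPdf 0 x := by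
    intro x
    rw [div_le_iff₀ (hden x)]
    nlinarith [gaussPdf_pos R x, gaussPdf_pos 0 x, sq_nonneg (gaussPdf 0 x)]
  have hratio_p : ∀ x : ℝ,
      gaussPdf R x * gaussPdf 0 x / (gaussPdf R x + gaussPdf 0 x) ≤ gaussPdf R x := by
    intro x
    rw [div_le_iff₀ (hden x)]
    nlinarith [gaussPdf_pos R x, gaussPdf_pos 0 x, sq_nonneg (gaussPdf R x)]
  have hratio_nonneg : ∀ x : ℝ,
      0 ≤ gaussPdf R x * gaussPdf 0 x / (gaussPdf R x + gaussPdf 0 x) := fun x =>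
    div_nonneg (mul_nonneg (gaussPdf_pos R x).le (gaussPdf_pos 0 x).le) (hden x).le
  have hGnn : ∀ x : ℝ, 0 ≤ G x := fun x =>
    mul_nonneg (hratio_nonneg x) (sq_nonneg _)
  have hGle : ∀ x : ℝ, G x ≤ f x := fun x =>
    mul_le_mul (hratio_q x) (hsq x) (sq_nonneg _) (gaussPdf_pos 0 x).le
  have hGleL : ∀ x : ℝ, x ≤ R / 2 → G x ≤ gaussPdf 0 (x - R) * ((x - R) ^ 2 + 1) := by
    intro x hx
    rw [← gaussPdf_shift]
    have h1 : (v 0 * x - v 1) ^ 2 ≤ (x - R) ^ 2 + 1 := by nlinarith [hsq x]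
    exact mul_le_mul (hratio_p x) h1 (sq_nonneg _) (gaussPdf_pos R x).le
  -- integrability
  have hcontg : ∀ μ : ℝ, Continuous (gaussPdf μ) := fun μ => by
    unfold gaussPdf
    exact continuous_const.mul (Real.continuous_exp.comp
      ((((continuous_id.sub continuous_const).pow 2).neg).div_const 2))
  have hGcont : Continuous G := by
    refine Continuous.mul ?_
      (((continuous_const.mul continuous_id).sub continuous_const).pow 2)
    exact ((hcontg R).mul (hcontg 0)).div ((hcontg R).add (hcontg 0))
      (fun x => (hden x).ne')
  have hGint : Integrable G :=
    integrable_f.mono' hGcont.aestronglyMeasurable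
      (ae_of_all _ fun x => by rw [Real.norm_of_nonneg (hGnn x)]; exact hGle x)
  have hfRint : Integrable (fun x : ℝ => gaussPdf 0 (x - R) * ((x - R) ^ 2 + 1)) :=
    integrable_f.comp_sub_right R
  -- split the integral at R/2
  have hsplit := intervalIntegral.integral_Iic_add_Ioi (b := R / 2) (μ := volume)
    hGint.integrableOn hGint.integrableOn
  -- right piece
  have hright : ∫ x in Ioi (R/2), G x ≤ R/2 * gaussPdf 0 (R/2) + 2 * (gaussPdf 0 (R/2) / (R/2)) := by
    calc ∫ x in Ioi (R/2), G x ≤ ∫ x in Ioi (R/2), f x :=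
          setIntegral_mono_on hGint.integrableOn integrable_f.integrableOn
            measurableSet_Ioi (fun x _ => hGle x)
      _ ≤ _ := tail_f_le (R/2) hapos
  -- left piece: reflect
  have hshift : ∫ x in Iic (R/2), gaussPdf 0 (x - R) * ((x - R) ^ 2 + 1)
      = ∫ u in Iic (-(R/2)), f u := by
    have h := (measurePreserving_add_right (volume : Measure ℝ) (-R)).setIntegral_preimage_emb
      (MeasurableEquiv.addRight (-R)).measurableEmbedding f (Iic (-(R/2)))
    have hpre : (fun x : ℝ => x + -R) ⁻¹' Iic (-(R/2)) = Iic (R/2) := by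
      ext x
      simp only [Set.mem_preimage, Set.mem_Iic]
      constructor <;> intro h' <;> linarith
    rw [hpre] at h
    rw [← h]
    apply setIntegral_congr_fun measurableSet_Iic
    intro x _
    simp only [hfdef, sub_eq_add_neg]
  have hneg : ∫ u in Iic (-(R/2)), f u = ∫ u in Ici (R/2), f u := by
    have h := (Measure.measurePreserving_neg (volume : Measure ℝ)).setIntegral_preimage_emb
      (Homeomorph.neg ℝ).measurableEmbedding f (Iic (-(R/2)))
    have hpre : (Neg.neg : ℝ → ℝ) ⁻¹' Iic (-(R/2)) = Ici (R/2) := by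
      ext x
      simp only [Set.mem_preimage, Set.mem_Iic, Set.mem_Ici]
      constructor <;> intro h' <;> linarith
    rw [hpre] at h
    rw [← h]
    apply setIntegral_congr_fun measurableSet_Ici
    intro x _
    show f (-x) = f x
    simp only [hfdef]
    rw [gaussPdf_even, neg_pow, show ((-1:ℝ))^2 = 1 by norm_num]
    ring
  have hleft : ∫ x in Iic (R/2), G x
      ≤ R/2 * gaussPdf 0 (R/2) + 2 * (gaussPdf 0 (R/2) / (R/2)) := by
    calc ∫ x in Iic (R/2), G x
        ≤ ∫ x in Iic (R/2), gaussPdf 0 (x - R) * ((x - R) ^ 2 + 1) :=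
          setIntegral_mono_on hGint.integrableOn hfRint.integrableOn
            measurableSet_Iic (fun x hx => hGleL x hx)
      _ = ∫ u in Iic (-(R/2)), f u := hshift
      _ = ∫ u in Ici (R/2), f u := hneg
      _ = ∫ u in Ioi (R/2), f u := integral_Ici_eq_integral_Ioi
      _ ≤ _ := tail_f_le (R/2) hapos
  -- combine
  have hfinal : R/2 * gaussPdf 0 (R/2) + 2 * (gaussPdf 0 (R/2) / (R/2))
      ≤ R * gaussPdf 0 (R/2) := by
    have hg := (gaussPdf_pos 0 (R/2)).le
    have hkey : R/2 * gaussPdf 0 (R/2) + 2 * (gaussPdf 0 (R/2) / (R/2))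
        = (R/2 + 4/R) * gaussPdf 0 (R/2) := by
      field_simp
      ring
    rw [hkey]
    apply mul_le_mul_of_nonneg_right _ hg
    rw [div_add_div _ _ (by norm_num : (2:ℝ) ≠ 0) hRpos.ne', div_le_iff₀ (by positivity)]
    nlinarith
  have hrhs : R * gaussPdf 0 (R/2)
      = (R / Real.sqrt (2 * Real.pi)) * Real.exp (-R ^ 2 / 8) := by
    unfold gaussPdf
    rw [show -(R/2 - 0) ^ 2 / 2 = -R ^ 2 / 8 by ring]
    ring
  have hInt : ∫ x : ℝ, G x
      = (∫ x in Iic (R/2), G x) + ∫ x in Ioi (R/2), G x := hsplit.symm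
  show (1/2 : ℝ) * ∫ x : ℝ, G x ≤ _
  rw [hInt, ← hrhs]
  linarith
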